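/- Let n be a positive integer and x⋆ ∈ {0,1}^n, and define the n×n matrix Q̂² (with indices 1 ≤ i, j ≤ n) by Q̂²_{ij} = max(i, j) if x⋆_i x⋆_j = 1 and Q̂²_{ij} = −max(i, j) otherwise. Then Q̂² is symmetric, and x⋆ is both the unique 1-bit-flip local maximum and the unique global maximum over {0,1}^n of f̂²(x) = xᵀQ̂²x. -/
import Mathlib

/-- UBQP objective `f_Q(x) = xᵀQx`. -/
def fQ {n : ℕ} (Q : Fin n → Fin n → ℝ) (x : Fin n → ℝ) : ℝ :=
  ∑ i, ∑ j, Q i j * x i * x j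

/-- `flipBit x k` is `x` with its `k`-th coordinate flipped (`0 ↔ 1` on binary vectors). -/
def flipBit {n : ℕ} (x : Fin n → ℝ) (k : Fin n) : Fin n → ℝ :=
  Function.update x k (1 - x k)

/-- `x` is a binary (0/1) vector. -/
def IsBinary {n : ℕ} (x : Fin n → ℝ) : Prop := ∀ i, x i = 0 ∨ x i = 1

/-- The toy matrix `Q̂²` ("construct by ±i") with 1-based indices: entry `max(i, j)` if
`x⋆_i x⋆_j = 1`, and `−max(i, j)` otherwise. -/
noncomputable def Qhat2 {n : ℕ} (xs : Fin n → ℝ) : Fin n → Fin n → ℝ :=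
  fun i j => if xs i * xs j = 1 then ((max i.1 j.1 : ℕ) + 1 : ℝ)
             else -((max i.1 j.1 : ℕ) + 1 : ℝ)

lemma QsplitAux {n : ℕ} (Q : Fin n → Fin n → ℝ) (k : Fin n) (y : Fin n → ℝ) :
    fQ Q y = Q k k * y k * y k
      + (∑ j ∈ Finset.univ.erase k, Q k j * y k * y j)
      + (∑ i ∈ Finset.univ.erase k, Q i k * y i * y k)
      + ∑ i ∈ Finset.univ.erase k, ∑ j ∈ Finset.univ.erase k, Q i j * y i * y j := by
  unfold fQ
  rw [show (∑ i, ∑ j, Q i j * y i * y j)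
      = ∑ i, (Q i k * y i * y k + ∑ j ∈ Finset.univ.erase k, Q i j * y i * y j) from
    Finset.sum_congr rfl fun i _ => (Finset.add_sum_erase _ _ (Finset.mem_univ k)).symm]
  rw [Finset.sum_add_distrib,
    ← Finset.add_sum_erase _ (fun i => Q i k * y i * y k) (Finset.mem_univ k),
    ← Finset.add_sum_erase _ (fun i => ∑ j ∈ Finset.univ.erase k, Q i j * y i * y j)
      (Finset.mem_univ k)]
  ring

lemma flip_diff {n : ℕ} (Q : Fin n → Fin n → ℝ) (hQ : ∀ i j, Q i j = Q j i)
    (x : Fin n → ℝ) (k : Fin n) :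
    fQ Q (flipBit x k) = fQ Q x
      + (1 - 2 * x k) * (Q k k + 2 * ∑ j ∈ Finset.univ.erase k, Q k j * x j) := by
  have e1 : flipBit x k k = 1 - x k := Function.update_self _ _ _
  have e2 : ∀ i ∈ Finset.univ.erase k, flipBit x k i = x i := fun i hi =>
    Function.update_of_ne (Finset.ne_of_mem_erase hi) _ _
  have hA1 : ∑ j ∈ Finset.univ.erase k, Q k j * flipBit x k k * flipBit x k j
      = (1 - x k) * ∑ j ∈ Finset.univ.erase k, Q k j * x j := by
    rw [Finset.mul_sum]
    exact Finset.sum_congr rfl fun j hj => by rw [e1, e2 j hj]; ring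
  have hA2 : ∑ i ∈ Finset.univ.erase k, Q i k * flipBit x k i * flipBit x k k
      = (1 - x k) * ∑ j ∈ Finset.univ.erase k, Q k j * x j := by
    rw [Finset.mul_sum]
    exact Finset.sum_congr rfl fun i hi => by rw [e1, e2 i hi, hQ i k]; ring
  have hD : ∑ i ∈ Finset.univ.erase k, ∑ j ∈ Finset.univ.erase k,
        Q i j * flipBit x k i * flipBit x k j
      = ∑ i ∈ Finset.univ.erase k, ∑ j ∈ Finset.univ.erase k, Q i j * x i * x j :=
    Finset.sum_congr rfl fun i hi => Finset.sum_congr rfl fun j hj => by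
      rw [e2 i hi, e2 j hj]
  have hB1 : ∑ j ∈ Finset.univ.erase k, Q k j * x k * x j
      = x k * ∑ j ∈ Finset.univ.erase k, Q k j * x j := by
    rw [Finset.mul_sum]; exact Finset.sum_congr rfl fun j hj => by ring
  have hB2 : ∑ i ∈ Finset.univ.erase k, Q i k * x i * x k
      = x k * ∑ j ∈ Finset.univ.erase k, Q k j * x j := by
    rw [Finset.mul_sum]; exact Finset.sum_congr rfl fun i hi => by rw [hQ i k]; ring
  rw [QsplitAux Q k (flipBit x k), QsplitAux Q k x, hA1, hA2, hD, hB1, hB2, e1]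
  ring

lemma Qhat2_pos {n : ℕ} (xs : Fin n → ℝ) {i j : Fin n} (hi : xs i = 1) (hj : xs j = 1) :
    Qhat2 xs i j = ((max i.1 j.1 : ℕ) + 1 : ℝ) := by
  unfold Qhat2; rw [hi, hj, if_pos (one_mul 1)]

lemma Qhat2_neg {n : ℕ} (xs : Fin n → ℝ) {i j : Fin n} (h : xs i = 0 ∨ xs j = 0) :
    Qhat2 xs i j = -((max i.1 j.1 : ℕ) + 1 : ℝ) := by
  unfold Qhat2
  rcases h with h | h
  · rw [h, zero_mul, if_neg (by norm_num)]
  · rw [h, mul_zero, if_neg (by norm_num)]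

lemma term_le {n : ℕ} (xs x : Fin n → ℝ) (hxs : IsBinary xs) (hx : IsBinary x) (i j : Fin n) :
    Qhat2 xs i j * x i * x j ≤ Qhat2 xs i j * xs i * xs j := by
  have hM : (0:ℝ) < ((max i.1 j.1 : ℕ) + 1 : ℝ) := by positivity
  rcases hxs i with h1 | h1
  · rw [Qhat2_neg xs (Or.inl h1), h1]
    rcases hx i with h3 | h3 <;> rcases hx j with h4 | h4 <;> rw [h3, h4] <;> nlinarith
  · rcases hxs j with h2 | h2
    · rw [Qhat2_neg xs (Or.inr h2), h1, h2]
      rcases hx i with h3 | h3 <;> rcases hx j with h4 | h4 <;> rw [h3, h4] <;> nlinarith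
    · rw [Qhat2_pos xs h1 h2, h1, h2]
      rcases hx i with h3 | h3 <;> rcases hx j with h4 | h4 <;> rw [h3, h4] <;> nlinarith

lemma term_lt_diag {n : ℕ} (xs x : Fin n → ℝ) (hxs : IsBinary xs) (hx : IsBinary x)
    (k : Fin n) (hk : x k ≠ xs k) :
    Qhat2 xs k k * x k * x k < Qhat2 xs k k * xs k * xs k := by
  have hM : (0:ℝ) < ((max k.1 k.1 : ℕ) + 1 : ℝ) := by positivity
  rcases hxs k with h1 | h1 <;> rcases hx k with h3 | h3
  · exact absurd (h3.trans h1.symm) hk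
  · rw [Qhat2_neg xs (Or.inl h1), h1, h3]; nlinarith
  · rw [Qhat2_pos xs h1 h1, h1, h3]; nlinarith
  · exact absurd (h3.trans h1.symm) hk

lemma global_lt {n : ℕ} (xs x : Fin n → ℝ) (hxs : IsBinary xs) (hx : IsBinary x)
    (hne : x ≠ xs) : fQ (Qhat2 xs) x < fQ (Qhat2 xs) xs := by
  obtain ⟨k, hk⟩ := Function.ne_iff.mp hne
  unfold fQ
  refine Finset.sum_lt_sum (fun i _ => Finset.sum_le_sum fun j _ => term_le xs x hxs hx i j)
    ⟨k, Finset.mem_univ k, ?_⟩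
  exact Finset.sum_lt_sum (fun j _ => term_le xs x hxs hx k j)
    ⟨k, Finset.mem_univ k, term_lt_diag xs x hxs hx k hk⟩

/-- `Q̂²` is symmetric and `x⋆` is its unique 1-bit-flip local maximum and its
unique global maximum over `{0,1}^n`. -/
theorem Qhat2_unimodal {n : ℕ} (hn : 0 < n)
    (xs : Fin n → ℝ) (hxs : IsBinary xs) :
    (∀ i j, Qhat2 xs i j = Qhat2 xs j i) ∧
    (∀ k, fQ (Qhat2 xs) (flipBit xs k) ≤ fQ (Qhat2 xs) xs) ∧
    (∀ x : Fin n → ℝ, IsBinary x →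
      (∀ k, fQ (Qhat2 xs) (flipBit x k) ≤ fQ (Qhat2 xs) x) → x = xs) ∧
    (∀ x : Fin n → ℝ, IsBinary x → x ≠ xs → fQ (Qhat2 xs) x < fQ (Qhat2 xs) xs) := by
  have hsym : ∀ i j, Qhat2 xs i j = Qhat2 xs j i := by
    intro i j
    unfold Qhat2
    rw [mul_comm (xs i) (xs j), Nat.max_comm]
  refine ⟨hsym, ?_, ?_, fun x hx hne => global_lt xs x hxs hx hne⟩
  · intro k
    have hb : IsBinary (flipBit xs k) := by
      intro i
      by_cases h : i = k
      · subst h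
        have e : flipBit xs i i = 1 - xs i := Function.update_self _ _ _
        rw [e]
        rcases hxs i with h | h <;> rw [h] <;> norm_num
      · have e : flipBit xs k i = xs i := Function.update_of_ne h _ _
        rw [e]; exact hxs i
    have hne : flipBit xs k ≠ xs := by
      intro h
      have e : flipBit xs k k = 1 - xs k := Function.update_self _ _ _
      have := congrFun h k
      rw [e] at this
      rcases hxs k with h' | h' <;> rw [h'] at this <;> norm_num at this
    exact le_of_lt (global_lt xs _ hxs hb hne)
  · intro x hx hloc
    have key : ∀ k, (1 - 2 * x k) *
        (Qhat2 xs k k + 2 * ∑ j ∈ Finset.univ.erase k, Qhat2 xs k j * x j) ≤ 0 := by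
      intro k
      have h := hloc k
      rw [flip_diff (Qhat2 xs) hsym x k] at h
      linarith
    have step1 : ∀ k, x k = 1 → xs k = 1 := by
      intro k hk1
      rcases hxs k with h0 | h1
      · exfalso
        have hQkk : Qhat2 xs k k = -(((k:ℕ):ℝ) + 1) := by simp [Qhat2, h0]
        have hsum : ∑ j ∈ Finset.univ.erase k, Qhat2 xs k j * x j ≤ 0 := by
          refine Finset.sum_nonpos fun j _ => ?_
          rcases hx j with hj0 | hj1
          · simp [hj0]
          · rw [hj1, mul_one]
            have : Qhat2 xs k j = -(((max k.1 j.1 : ℕ):ℝ) + 1) := by simp [Qhat2, h0]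
            rw [this]
            have : (0:ℝ) ≤ ((max k.1 j.1 : ℕ):ℝ) := Nat.cast_nonneg _
            linarith
        have hkey := key k
        rw [hk1, hQkk] at hkey
        have hpos : (0:ℝ) ≤ ((k:ℕ):ℝ) := Nat.cast_nonneg _
        nlinarith
      · exact h1
    have step2 : ∀ k, xs k = 1 → x k = 1 := by
      intro k hk1
      rcases hx k with h0 | h1
      · exfalso
        have hQkk : Qhat2 xs k k = ((k:ℕ):ℝ) + 1 := by simp [Qhat2, hk1]
        have hsum : 0 ≤ ∑ j ∈ Finset.univ.erase k, Qhat2 xs k j * x j := by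
          refine Finset.sum_nonneg fun j _ => ?_
          rcases hx j with hj0 | hj1
          · simp [hj0]
          · rw [hj1, mul_one]
            have hxsj := step1 j hj1
            have : Qhat2 xs k j = ((max k.1 j.1 : ℕ):ℝ) + 1 := by simp [Qhat2, hk1, hxsj]
            rw [this]
            have : (0:ℝ) ≤ ((max k.1 j.1 : ℕ):ℝ) := Nat.cast_nonneg _
            linarith
        have hkey := key k
        rw [h0, hQkk] at hkey
        have hpos : (0:ℝ) ≤ ((k:ℕ):ℝ) := Nat.cast_nonneg _
        nlinarith
      · exact h1
    funext k
    rcases hx k with h0 | h1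
    · rcases hxs k with h0' | h1'
      · rw [h0, h0']
      · exact absurd (step2 k h1') (by rw [h0]; norm_num)
    · rw [h1, step1 k h1]
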